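/- If M is an n×n P-matrix, then for every sign vector σ ∈ {−1,+1}ⁿ there exists a vector x ∈ ℝⁿ such that σ_j x_j > 0 and σ_j (Mx)_j > 0 for every j ∈ [n]. -/

import Mathlib

open Matrix Finset

lemma det_updateRow_single' {n : ℕ} (A : Matrix (Fin (n+1)) (Fin (n+1)) ℝ) (i : Fin (n+1)) :
    det (A.updateRow i (Pi.single i 1)) = det (A.submatrix i.succAbove i.succAbove) := by
  rw [det_succ_row _ i]
  rw [Finset.sum_eq_single i]
  · have h1 : (A.updateRow i (Pi.single i 1)).submatrix i.succAbove i.succAbove =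
        A.submatrix i.succAbove i.succAbove := by
      ext a b; simp [updateRow_apply, Fin.succAbove_ne i a]
    rw [h1]
    have : ((-1 : ℝ)) ^ ((i:ℕ) + (i:ℕ)) = 1 := by
      rw [← two_mul, pow_mul]; norm_num
    simp [this]
  · intro j _ hj
    simp [updateRow_apply, Pi.single_apply, hj.symm]
  · simp

/-- A square real matrix is a P-matrix if all of its principal minors are positive. -/
def IsPMat {n : ℕ} (M : Matrix (Fin n) (Fin n) ℝ) : Prop :=
  ∀ S : Finset (Fin n),
    0 < (M.submatrix (Subtype.val : {i // i ∈ S} → Fin n) Subtype.val).det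

lemma isPMat_submatrix {m n : ℕ} (M : Matrix (Fin n) (Fin n) ℝ) (hM : IsPMat M)
    (f : Fin m → Fin n) (hf : Function.Injective f) : IsPMat (M.submatrix f f) := by
  intro S
  set T : Finset (Fin n) := S.image f with hT
  have hg : Function.Bijective (fun x : {i // i ∈ S} =>
      (⟨f x.1, Finset.mem_image_of_mem f x.2⟩ : {j // j ∈ T})) := by
    constructor
    · intro a b hab
      exact Subtype.ext (hf (congrArg Subtype.val hab))
    · rintro ⟨j, hj⟩
      obtain ⟨i, hi, rfl⟩ := Finset.mem_image.mp hj
      exact ⟨⟨i, hi⟩, rfl⟩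
  set e := Equiv.ofBijective _ hg
  have key : (M.submatrix (Subtype.val : {j // j ∈ T} → Fin n) Subtype.val).submatrix e e
      = (M.submatrix f f).submatrix (Subtype.val : {i // i ∈ S} → Fin m) Subtype.val := by
    ext a b; simp [e, Equiv.ofBijective]
  rw [← key, Matrix.det_submatrix_equiv_self e]
  exact hM T

lemma IsPMat.detPos {n : ℕ} {M : Matrix (Fin n) (Fin n) ℝ} (hM : IsPMat M) : 0 < M.det := by
  have h := hM Finset.univ
  rwa [show M.submatrix (Subtype.val : {i // i ∈ (Finset.univ : Finset (Fin n))} → Fin n)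
        Subtype.val
      = M.submatrix (Equiv.subtypeUnivEquiv (fun x : Fin n => Finset.mem_univ x))
        (Equiv.subtypeUnivEquiv (fun x : Fin n => Finset.mem_univ x)) from by
      ext a b; simp,
    Matrix.det_submatrix_equiv_self] at h

lemma submatrix_add_diagonal {n m : ℕ} (M : Matrix (Fin n) (Fin n) ℝ) (d : Fin n → ℝ)
    (f : Fin m → Fin n) (hf : Function.Injective f) :
    (M + diagonal d).submatrix f f = M.submatrix f f + diagonal (d ∘ f) := by
  ext a b
  by_cases h : a = b
  · subst h; simp
  · simp [Matrix.submatrix_apply, diagonal_apply_ne _ h,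
      diagonal_apply_ne _ (fun h' : f a = f b => h (hf h'))]

lemma detPos_add_diag : ∀ (n : ℕ) (M : Matrix (Fin n) (Fin n) ℝ), IsPMat M →
    ∀ d : Fin n → ℝ, (∀ i, 0 ≤ d i) → 0 < (M + diagonal d).det := by
  intro n
  induction n with
  | zero => intro M _ d _; simp [Matrix.det_fin_zero]
  | succ n ih =>
    intro M hM
    suffices aux : ∀ (k : ℕ) (d : Fin (n+1) → ℝ), (∀ i, 0 ≤ d i) →
        (Finset.univ.filter fun i => d i ≠ 0).card = k → 0 < (M + diagonal d).det by
      intro d hd; exact aux _ d hd rfl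
    intro k
    induction k with
    | zero =>
      intro d hd hcard
      have hfe := Finset.card_eq_zero.mp hcard
      have hd0 : d = 0 := by
        funext j
        simp only [Pi.zero_apply]
        by_contra h
        have hj : j ∈ Finset.univ.filter fun i => d i ≠ 0 := by simp [h]
        rw [hfe] at hj
        exact absurd hj (Finset.notMem_empty j)
      rw [hd0]
      have : diagonal (0 : Fin (n+1) → ℝ) = 0 := Matrix.diagonal_zero
      rw [this, add_zero]
      exact hM.detPos
    | succ k ihk =>
      intro d hd hcard
      have hne : (Finset.univ.filter fun i => d i ≠ 0).Nonempty := by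
        rw [← Finset.card_pos, hcard]; exact Nat.succ_pos k
      obtain ⟨i, hi⟩ := hne
      have hdi : d i ≠ 0 := by simpa using (Finset.mem_filter.mp hi).2
      set d' : Fin (n+1) → ℝ := Function.update d i 0 with hd'
      have hd'pos : ∀ j, 0 ≤ d' j := by
        intro j
        by_cases h : j = i
        · subst h; simp [hd']
        · simpa [hd', Function.update_of_ne h] using hd j
      have hcard' : (Finset.univ.filter fun j => d' j ≠ 0).card = k := by
        have heq : (Finset.univ.filter fun j => d' j ≠ 0)
            = (Finset.univ.filter fun j => d j ≠ 0).erase i := by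
          ext j
          simp only [Finset.mem_filter, Finset.mem_erase, Finset.mem_univ, true_and]
          constructor
          · intro h
            have hji : j ≠ i := by rintro rfl; simp [hd'] at h
            exact ⟨hji, by simpa [hd', Function.update_of_ne hji] using h⟩
          · rintro ⟨hji, h⟩; simpa [hd', Function.update_of_ne hji] using h
        rw [heq, Finset.card_erase_of_mem hi, hcard]
        omega
      have hsplit : M + diagonal d
          = (M + diagonal d').updateRow i
            ((M + diagonal d') i + d i • (Pi.single i 1 : Fin (n+1) → ℝ)) := by
        ext a b
        rw [Matrix.updateRow_apply]
        by_cases h : a = i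
        · rw [if_pos h, h]
          by_cases hb : i = b
          · rw [← hb]
            simp [hd', Pi.single_apply]
          · simp [Matrix.add_apply, diagonal_apply_ne _ hb, Pi.single_apply, Ne.symm hb]
        · rw [if_neg h]
          by_cases hb : a = b
          · subst hb
            simp [hd', Matrix.add_apply, Function.update_of_ne h]
          · simp [Matrix.add_apply, diagonal_apply_ne _ hb]
      rw [hsplit, Matrix.det_updateRow_add, Matrix.updateRow_eq_self,
        Matrix.det_updateRow_smul, det_updateRow_single']
      have h1 : 0 < (M + diagonal d').det := ihk d' hd'pos hcard'
      have h2 : 0 < ((M + diagonal d').submatrix i.succAbove i.succAbove).det := by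
        rw [submatrix_add_diagonal M d' i.succAbove Fin.succAbove_right_injective]
        exact ih (M.submatrix i.succAbove i.succAbove)
          (isPMat_submatrix M hM i.succAbove Fin.succAbove_right_injective)
          (d' ∘ i.succAbove) (fun j => hd'pos _)
      have h3 : 0 ≤ d i * ((M + diagonal d').submatrix i.succAbove i.succAbove).det :=
        mul_nonneg (hd i) h2.le
      linarith

lemma signNonReversal {n : ℕ} (M : Matrix (Fin n) (Fin n) ℝ) (hM : IsPMat M)
    (x : Fin n → ℝ) (hx : x ≠ 0) (h : ∀ k, x k * M.mulVec x k ≤ 0) : False := by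
  classical
  set S : Finset (Fin n) := Finset.univ.filter (fun k => x k ≠ 0) with hS
  have hSne : S.Nonempty := by
    obtain ⟨k, hk⟩ := Function.ne_iff.mp hx
    exact ⟨k, by simp only [hS, Finset.mem_filter, Finset.mem_univ, true_and]; simpa using hk⟩
  set m := S.card with hm
  set e := S.orderIsoOfFin rfl with he
  set f : Fin m → Fin n := fun i => (e i : Fin n) with hf
  have hfinj : Function.Injective f := by
    intro a b hab
    exact e.injective (Subtype.ext hab)
  have hfS : ∀ i, f i ∈ S := fun i => (e i).2
  set A := M.submatrix f f with hA
  set y : Fin m → ℝ := fun i => x (f i) with hy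
  have hyne : ∀ i, y i ≠ 0 := by
    intro i
    have := hfS i
    rw [hS, Finset.mem_filter] at this
    exact this.2
  have hxS : ∀ k, k ∉ S → x k = 0 := by
    intro k hk
    by_contra h'
    exact hk (by simp [hS, h'])
  have sum_reindex : ∀ r : Fin n → ℝ, ∑ j, r (f j) * x (f j) = ∑ k, r k * x k := by
    intro r
    rw [← Finset.sum_subset (Finset.subset_univ S) (fun k _ hk => by rw [hxS k hk, mul_zero])]
    rw [← Finset.sum_attach S (fun k => r k * x k)]
    exact Fintype.sum_equiv e.toEquiv _ _ (fun i => rfl)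
  have key : ∀ i, A.mulVec y i = M.mulVec x (f i) := by
    intro i
    calc A.mulVec y i = ∑ j, M (f i) (f j) * x (f j) := rfl
    _ = ∑ k, M (f i) k * x k := sum_reindex (fun k => M (f i) k)
    _ = M.mulVec x (f i) := rfl
  set d : Fin m → ℝ := fun i => -(A.mulVec y i) / y i with hd
  have hdpos : ∀ i, 0 ≤ d i := by
    intro i
    have h1 : y i * A.mulVec y i ≤ 0 := by rw [key i]; exact h (f i)
    have h2 : (y i * A.mulVec y i) / (y i * y i) ≤ 0 :=
      div_nonpos_of_nonpos_of_nonneg h1 (mul_self_nonneg _)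
    rw [mul_div_mul_left _ _ (hyne i)] at h2
    rw [hd]
    simp only [neg_div]
    linarith
  have hmv : (A + diagonal d).mulVec y = 0 := by
    funext i
    rw [Matrix.add_mulVec]
    simp only [Pi.add_apply, Pi.zero_apply]
    rw [Matrix.mulVec_diagonal]
    rw [hd]
    show (A *ᵥ y) i + -(A *ᵥ y) i / y i * y i = 0
    rw [div_mul_cancel₀ _ (hyne i)]
    ring
  have hdet : (A + diagonal d).det = 0 := by
    rw [← Matrix.exists_mulVec_eq_zero_iff]
    refine ⟨y, ?_, hmv⟩
    exact Function.ne_iff.mpr ⟨⟨0, Finset.card_pos.mpr hSne⟩, by simpa using hyne _⟩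
  have := detPos_add_diag m A (isPMat_submatrix M hM f hfinj) d hdpos
  rw [hdet] at this
  exact lt_irrefl 0 this

lemma isPMat_transpose {n : ℕ} (M : Matrix (Fin n) (Fin n) ℝ) (hM : IsPMat M) : IsPMat Mᵀ := by
  intro S
  have hEq : Mᵀ.submatrix (Subtype.val : {i // i ∈ S} → Fin n) Subtype.val
      = (M.submatrix (Subtype.val : {i // i ∈ S} → Fin n) Subtype.val)ᵀ := by
    ext a b; simp
  rw [hEq, Matrix.det_transpose]
  exact hM S

lemma isPMat_semipositive {n : ℕ} (N : Matrix (Fin n) (Fin n) ℝ) (hN : IsPMat N) :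
    ∃ x : Fin n → ℝ, (∀ j, 0 < x j) ∧ ∀ j, 0 < N.mulVec x j := by
  classical
  set v : Fin n ⊕ Fin n → (Fin n → ℝ) :=
    Sum.elim (fun i => N i) (fun k => Pi.single k 1) with hv
  set L : ((Fin n ⊕ Fin n) → ℝ) →ₗ[ℝ] (Fin n → ℝ) :=
    { toFun := fun w => ∑ a, w a • v a
      map_add' := by intro a b; simp [add_smul, Finset.sum_add_distrib]
      map_smul' := by intro c w; simp [Finset.smul_sum, smul_smul] } with hL
  set C : Set (Fin n → ℝ) := L '' stdSimplex ℝ (Fin n ⊕ Fin n) with hC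
  have hCconv : Convex ℝ C := (convex_stdSimplex ℝ _).linear_image L
  have hCcomp : IsCompact C := (isCompact_stdSimplex ℝ _).image L.continuous_of_finiteDimensional
  have h0 : (0 : Fin n → ℝ) ∉ C := by
    rintro ⟨w, hw, hw0⟩
    obtain ⟨hwpos, hwsum⟩ := hw
    set y : Fin n → ℝ := fun i => w (Sum.inl i) with hy
    have hyMt : ∀ j, Nᵀ.mulVec y j = -(w (Sum.inr j)) := by
      intro j
      have h1 : (∑ a, w a • v a) j = 0 := by rw [show (∑ a, w a • v a) = 0 from hw0]; rfl
      rw [Finset.sum_apply] at h1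
      simp only [Pi.smul_apply, smul_eq_mul] at h1
      rw [Fintype.sum_sum_type] at h1
      have h2 : ∑ k, w (Sum.inr k) * v (Sum.inr k) j = w (Sum.inr j) := by
        rw [Finset.sum_eq_single j]
        · simp [hv]
        · intro b _ hb; simp [hv, Pi.single_apply, Ne.symm hb]
        · simp
      have h3 : ∑ i, w (Sum.inl i) * v (Sum.inl i) j = Nᵀ.mulVec y j := by
        simp only [hv, Sum.elim_inl]
        rw [show Nᵀ.mulVec y j = ∑ i, Nᵀ j i * y i from rfl]
        exact Finset.sum_congr rfl fun i _ => by rw [Matrix.transpose_apply, mul_comm]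
      rw [h3, h2] at h1
      linarith
    have hy0 : y ≠ 0 := by
      intro hy0
      have hwr : ∀ j, w (Sum.inr j) = 0 := by
        intro j
        have := hyMt j
        rw [hy0] at this
        simpa using this.symm
      have hwl : ∀ i, w (Sum.inl i) = 0 := fun i => congrFun hy0 i
      rw [Fintype.sum_sum_type] at hwsum
      simp [hwl, hwr] at hwsum
    refine signNonReversal Nᵀ (isPMat_transpose N hN) y hy0 fun k => ?_
    rw [hyMt k]
    have := hwpos (Sum.inl k)
    have := hwpos (Sum.inr k)
    nlinarith [hwpos (Sum.inl k), hwpos (Sum.inr k)]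
  obtain ⟨f, u, hfa, hu⟩ := geometric_hahn_banach_closed_point hCconv hCcomp.isClosed h0
  have hu0 : u < 0 := by simpa using hu
  have hvC : ∀ a, v a ∈ C := by
    intro a
    refine ⟨Pi.single a 1, ⟨fun b => ?_, ?_⟩, ?_⟩
    · by_cases h : b = a
      · subst h; simp
      · simp [Pi.single_apply, h]
    · simp [Pi.single_apply]
    · simp only [hL, LinearMap.coe_mk, AddHom.coe_mk]
      rw [Finset.sum_eq_single a]
      · simp
      · intro b _ hb; simp [Pi.single_apply, Ne.symm hb]
      · simp
  refine ⟨fun j => -f (Pi.single j 1), fun j => ?_, fun j => ?_⟩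
  · have := hfa _ (hvC (Sum.inr j))
    simp only [hv, Sum.elim_inr] at this
    show (0:ℝ) < -f (Pi.single j 1)
    linarith
  · have hsum : (∑ k, N j k • (Pi.single k 1 : Fin n → ℝ)) = N j := by
      funext l
      rw [Finset.sum_apply]
      rw [Finset.sum_eq_single l]
      · simp
      · intro b _ hb; simp [Pi.single_apply, Ne.symm hb]
      · simp
    have hmv : N.mulVec (fun k => -f (Pi.single k 1)) j = -f (N j) := by
      rw [show N.mulVec (fun k => -f (Pi.single k 1)) j
          = ∑ k, N j k * (-f (Pi.single k 1)) from rfl]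
      have hfN : f (N j) = ∑ k, N j k * f (Pi.single k 1) := by
        conv_lhs => rw [← hsum]
        rw [map_sum]
        exact Finset.sum_congr rfl fun k _ => by rw [f.map_smul, smul_eq_mul]
      rw [hfN, ← Finset.sum_neg_distrib]
      exact Finset.sum_congr rfl fun k _ => by ring
    rw [hmv]
    have := hfa _ (hvC (Sum.inl j))
    simp only [hv, Sum.elim_inl] at this
    linarith

lemma isPMat_scaled {n : ℕ} (M : Matrix (Fin n) (Fin n) ℝ) (hM : IsPMat M)
    (σ : Fin n → ℝ) (hσ : ∀ j, σ j = 1 ∨ σ j = -1) :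
    IsPMat (Matrix.of fun i j => σ i * M i j * σ j) := by
  intro S
  set c : {i // i ∈ S} → ℝ := fun a => σ a.1 with hc
  set B := M.submatrix (Subtype.val : {i // i ∈ S} → Fin n) Subtype.val with hB
  have hEq : (Matrix.of fun i j => σ i * M i j * σ j).submatrix
        (Subtype.val : {i // i ∈ S} → Fin n) Subtype.val
      = diagonal c * B * diagonal c := by
    ext a b
    rw [Matrix.mul_diagonal, Matrix.diagonal_mul]
    simp [hB, hc]
  rw [hEq, Matrix.det_mul, Matrix.det_mul, Matrix.det_diagonal]
  have h1 : (∏ a, c a) * (∏ a, c a) = 1 := by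
    rw [← Finset.prod_mul_distrib]
    exact Finset.prod_eq_one fun a _ => by rcases hσ a.1 with h | h <;> rw [hc] <;>
      simp only [h] <;> norm_num
  have h2 : (∏ a, c a) * B.det * (∏ a, c a) = B.det * ((∏ a, c a) * (∏ a, c a)) := by ring
  rw [h2, h1, mul_one]
  exact hM S

theorem pMatrix_sign_vector {n : ℕ} (M : Matrix (Fin n) (Fin n) ℝ) (hM : IsPMat M)
    (σ : Fin n → ℝ) (hσ : ∀ j, σ j = 1 ∨ σ j = -1) :
    ∃ x : Fin n → ℝ, ∀ j, 0 < σ j * x j ∧ 0 < σ j * M.mulVec x j := by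
  set N : Matrix (Fin n) (Fin n) ℝ := Matrix.of fun i j => σ i * M i j * σ j with hNdef
  obtain ⟨x, hx, hNx⟩ := isPMat_semipositive N (isPMat_scaled M hM σ hσ)
  have hσsq : ∀ j, σ j * σ j = 1 := fun j => by
    rcases hσ j with h | h <;> rw [h] <;> norm_num
  refine ⟨fun k => σ k * x k, fun j => ?_⟩
  constructor
  · show 0 < σ j * (σ j * x j)
    rw [← mul_assoc, hσsq j, one_mul]
    exact hx j
  · have hkey : σ j * M.mulVec (fun k => σ k * x k) j = N.mulVec x j := by
      rw [show M.mulVec (fun k => σ k * x k) j = ∑ k, M j k * (σ k * x k) from rfl,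
        show N.mulVec x j = ∑ k, (σ j * M j k * σ k) * x k from rfl, Finset.mul_sum]
      exact Finset.sum_congr rfl fun k _ => by ring
    rw [hkey]
    exact hNx j
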